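/- For positive integers T and R, λ^{m+n}(E_{T,R}) = Σ_k q^{⌈(R−k)a₁⌉+⋯+⌈(R−k)a_m⌉−m} · (q^{⌊k·a_{m+1}⌋+⋯+⌊k·a_{m+n}⌋} − q^{⌈k·a_{m+1}⌉+⋯+⌈k·a_{m+n}⌉−n}), where the sum runs over all rational numbers k with 0 ≤ k ≤ T; a term is nonzero only if k = l/a_{m+j} for some nonnegative integer l and some 1 ≤ j ≤ n, so the sum is finite. -/

import Mathlib

set_option linter.unusedSectionVars false
set_option synthInstance.maxHeartbeats 1000000
set_option maxHeartbeats 1000000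
set_option linter.unusedTactic false

open MeasureTheory Matrix Filter Topology

noncomputable section

namespace PaperKL

variable (Fq : Type) [Field Fq] [Fintype Fq]

/-- The local field `K = 𝔽_q((t⁻¹))`, realized as the field of formal Laurent series
in the variable `X = t⁻¹` over `𝔽_q`. -/
abbrev KK (Fq : Type) [Field Fq] : Type := LaurentSeries Fq

/-- The element `t` (the inverse of the Laurent-series variable `X = t⁻¹`). -/
def tElem : KK Fq := HahnSeries.single (-1 : ℤ) 1

/-- The ring `Z = 𝔽_q[t]` of polynomials in `t`, as a subalgebra of `K`. -/
def Zring : Subalgebra Fq (KK Fq) := Algebra.adjoin Fq {tElem Fq}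

/-- The ring `𝒪 = 𝔽_q[[t⁻¹]]` of formal power series in `t⁻¹`, as a subset of `K`. -/
def Oring : Set (KK Fq) := {f | ∀ i : ℤ, i < 0 → f.coeff i = 0}

/-- The absolute value `|f| = q^{deg f}` on `K` (`deg` of a Laurent series in `t⁻¹`
is minus its order in `X = t⁻¹`). -/
def absK (f : KK Fq) : ℝ :=
  @ite _ (f = 0) (Classical.dec _) 0 ((Fintype.card Fq : ℝ) ^ (-f.order))

/-- Supremum norm on `K^d`. -/
def normInf {d : ℕ} (x : Fin d → KK Fq) : ℝ := ⨆ i, absK Fq (x i)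

/-- Supremum norm on matrices over `K`. -/
def normInfMat {m n : ℕ} (A : Fin m → Fin n → KK Fq) : ℝ := ⨆ i, ⨆ j, absK Fq (A i j)

/-- Weighted quasi-norm `‖x‖ = max_i |x_i|^{1/w i}`. -/
def normWt {k : ℕ} (w : Fin k → ℕ) (x : Fin k → KK Fq) : ℝ :=
  ⨆ i, (absK Fq (x i)) ^ ((w i : ℝ)⁻¹)

/-- The weighted quasi-norm `‖·‖_α` on `K^m` given by the first `m` weights. -/
def normAlpha {m n : ℕ} (a : Fin (m + n) → ℕ) (x : Fin m → KK Fq) : ℝ :=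
  normWt Fq (fun i => a (Fin.castAdd n i)) x

/-- The weighted quasi-norm `‖·‖_β` on `K^n` given by the last `n` weights. -/
def normBeta {m n : ℕ} (a : Fin (m + n) → ℕ) (y : Fin n → KK Fq) : ℝ :=
  normWt Fq (fun j => a (Fin.natAdd m j)) y

/-- `G = SL(d, K)`. -/
abbrev G (d : ℕ) : Type := Matrix.SpecialLinearGroup (Fin d) (KK Fq)

/-- `Γ = SL(d, Z)`, the subgroup of `G` of matrices with entries in `Z = 𝔽_q[t]`. -/
def Gamma (d : ℕ) : Subgroup (G Fq d) :=
  (Matrix.SpecialLinearGroup.map (n := Fin d) (Zring Fq).toSubring.subtype).range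

instance (d : ℕ) : TopologicalSpace (G Fq d) :=
  TopologicalSpace.induced (fun g => (g : Matrix (Fin d) (Fin d) (KK Fq))) inferInstance

instance : MeasurableSpace (KK Fq) := borel _

instance : BorelSpace (KK Fq) := ⟨rfl⟩

instance (d : ℕ) : MeasurableSpace (G Fq d) := borel _

/-- The homogeneous space `X = G/Γ`. -/
abbrev XSpace (d : ℕ) : Type := G Fq d ⧸ Gamma Fq d

lemma prod_zpow_eq {ι : Type*} (x : KK Fq) (hx : x ≠ 0) (s : Finset ι) (f : ι → ℤ) :
    ∏ i ∈ s, x ^ f i = x ^ ∑ i ∈ s, f i := by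
  classical
  induction s using Finset.induction with
  | empty => simp
  | insert _ _ h ih => rw [Finset.prod_insert h, Finset.sum_insert h, ih, zpow_add₀ hx]

lemma tElem_ne_zero : tElem Fq ≠ 0 := HahnSeries.single_ne_zero one_ne_zero

/-- The weight vector of the diagonal element `g_a`. -/
def wtVec (m n : ℕ) (a : Fin (m + n) → ℕ) : Fin (m + n) → ℤ :=
  Fin.addCases (fun i => (a (Fin.castAdd n i) : ℤ)) (fun j => -(a (Fin.natAdd m j) : ℤ))

/-- The diagonal element `g_a = diag(t^{a₁},…,t^{a_m},t^{−a_{m+1}},…,t^{−a_{m+n}}) ∈ SL(d,K)`. -/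
def ga {m n : ℕ} (a : Fin (m + n) → ℕ)
    (hsum : ∑ i : Fin m, a (Fin.castAdd n i) = ∑ j : Fin n, a (Fin.natAdd m j)) :
    G Fq (m + n) :=
  ⟨Matrix.diagonal (fun i => tElem Fq ^ wtVec m n a i), by
    rw [Matrix.det_diagonal, prod_zpow_eq Fq _ (tElem_ne_zero Fq)]
    have : ∑ i : Fin (m + n), wtVec m n a i = 0 := by
      rw [Fin.sum_univ_add]
      simp only [wtVec, Fin.addCases_left, Fin.addCases_right]
      rw [Finset.sum_neg_distrib]
      push_cast
      rw [← Nat.cast_sum, ← Nat.cast_sum, hsum]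
      ring
    rw [this, zpow_zero]⟩

/-- The unipotent element `u_A = [[I, A], [0, I]] ∈ SL(m+n, K)`. -/
def uA {m n : ℕ} (A : Fin m → Fin n → KK Fq) : G Fq (m + n) :=
  ⟨(Matrix.fromBlocks 1 (Matrix.of A) 0 1).submatrix finSumFinEquiv.symm finSumFinEquiv.symm, by
    rw [Matrix.det_submatrix_equiv_self, Matrix.det_fromBlocks_zero₂₁]; simp⟩

/-- `min a = min_i a_i`. -/
def minWt {k : ℕ} (a : Fin k → ℕ) : ℕ := ⨅ i, a i

/-- The product measure `λ^{mn}` on `Mat_{m×n}(K)`. -/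
def lamMat (m n : ℕ) (lam : Measure (KK Fq)) : Measure (Fin m → Fin n → KK Fq) :=
  Measure.pi fun _ => Measure.pi fun _ => lam

/-- The product measure `λ^d` on `K^d`. -/
def lamVec (d : ℕ) (lam : Measure (KK Fq)) : Measure (Fin d → KK Fq) :=
  Measure.pi fun _ => lam

/-- `C_c^∞(X)`: compactly supported functions on `X = G/Γ` whose lift to `G` is smooth,
i.e. right-invariant under some compact open subgroup of `G`. -/
def IsSmoothCc (d : ℕ) (φ : XSpace Fq d → ℝ) : Prop :=
  HasCompactSupport φ ∧
    ∃ U : Subgroup (G Fq d), IsOpen (U : Set (G Fq d)) ∧ IsCompact (U : Set (G Fq d)) ∧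
      ∀ g u : G Fq d, u ∈ U → φ (QuotientGroup.mk (g * u)) = φ (QuotientGroup.mk g)

/-- `C_c^∞(H)`, in the coordinates `H ≃ Mat_{m×n}(K)`: compactly supported smooth
(locally constant) functions. -/
def IsSmoothCcH (m n : ℕ) (f : (Fin m → Fin n → KK Fq) → ℝ) : Prop :=
  HasCompactSupport f ∧
    ∃ U : AddSubgroup (Fin m → Fin n → KK Fq),
      IsOpen (U : Set (Fin m → Fin n → KK Fq)) ∧
      IsCompact (U : Set (Fin m → Fin n → KK Fq)) ∧
      ∀ A B, B ∈ U → f (A + B) = f A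

/-- The lattice `g·Z^d ⊆ K^d` attached to `g`. -/
def latticeOf {d : ℕ} (g : Matrix (Fin d) (Fin d) (KK Fq)) : Set (Fin d → KK Fq) :=
  {v | ∃ w : Fin d → KK Fq, (∀ i, w i ∈ Zring Fq) ∧ v = g.mulVec w}

/-- `δ(g·Z^d)`: the length of the shortest nonzero vector of the lattice `g·Z^d`. -/
def deltaOf {d : ℕ} (g : Matrix (Fin d) (Fin d) (KK Fq)) : ℝ :=
  sInf {c | ∃ v ∈ latticeOf Fq g, v ≠ 0 ∧ c = normInf Fq v}

/-- `‖w₁ ∧ ⋯ ∧ w_r‖_∞`: the supremum norm of the coordinates of the wedge of `r` vectors in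
the standard basis of `⋀^r K^d`, i.e. the sup of the absolute values of the `r×r` minors. -/
def wedgeNorm {d r : ℕ} (w : Fin r → Fin d → KK Fq) : ℝ :=
  ⨆ I : {s : Finset (Fin d) // s.card = r},
    absK Fq (Matrix.det (Matrix.of fun i j : Fin r => w j ((I.1.orderIsoOfFin I.2 i : Fin d))))

/-- `α(g·Z^d)`: the supremum of `vol(KΔ/Δ)⁻¹` over `Z`-submodules `Δ` of the lattice `g·Z^d`,
where the covolume of a rank-`r` submodule with `Z`-basis `w₁,…,w_r` is `‖w₁ ∧ ⋯ ∧ w_r‖_∞`. -/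
def alphaOf {d : ℕ} (g : Matrix (Fin d) (Fin d) (KK Fq)) : ℝ :=
  sSup {c | ∃ r : ℕ, r ≤ d ∧ ∃ w : Fin r → Fin d → KK Fq,
    (∀ j, w j ∈ latticeOf Fq g) ∧ LinearIndependent (KK Fq) w ∧ c = (wedgeNorm Fq w)⁻¹}

/-- The congruence subgroup `K^{(l)} = (Id + t^{-l} Mat(d,𝒪)) ∩ SL(d,𝒪)` (for `l = 0`
this is `K₀ = SL(d,𝒪)`), as a subset of `G`. -/
def congSet (d l : ℕ) : Set (G Fq d) :=
  {g | ∀ i j : Fin d, ∀ s : ℤ, s < l →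
    ((g : Matrix (Fin d) (Fin d) (KK Fq)) i j
      - (1 : Matrix (Fin d) (Fin d) (KK Fq)) i j).coeff s = 0}

/-- The averaging operator `Av_l` over `K^{(l)}`, where `η l` is the probability Haar
measure on `K^{(l)}`. -/
def avgX {d : ℕ} (η : ℕ → Measure (G Fq d)) (l : ℕ) (φ : XSpace Fq d → ℝ) :
    XSpace Fq d → ℝ := fun x => ∫ k, φ (k • x) ∂(η l)

/-- The level-`l` projection `pr[l]`. -/
def prX {d : ℕ} (η : ℕ → Measure (G Fq d)) : ℕ → (XSpace Fq d → ℝ) → XSpace Fq d → ℝ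
  | 0 => fun φ => avgX Fq η 0 φ
  | (l + 1) => fun φ => avgX Fq η (l + 1) φ - avgX Fq η l φ

/-- The degree-`k` Sobolev norm `S_k(φ)` on `X`: `S_k(φ)² = Σ_{l≥0} q^{lk}‖pr[l]φ‖₂²`. -/
def sobolevX {d : ℕ} (η : ℕ → Measure (G Fq d)) (mu : Measure (XSpace Fq d)) (k : ℕ)
    (φ : XSpace Fq d → ℝ) : ℝ :=
  Real.sqrt (∑' l : ℕ, (Fintype.card Fq : ℝ) ^ (l * k) * ∫ x, (prX Fq η l φ x) ^ 2 ∂mu)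

/-- The family `η` is the family of probability Haar measures on the congruence
subgroups `K^{(l)}` of `G`. -/
def IsHaarFamily (d : ℕ) (η : ℕ → Measure (G Fq d)) : Prop :=
  ∀ l : ℕ, IsProbabilityMeasure (η l) ∧ η l (congSet Fq d l)ᶜ = 0 ∧
    ∀ k ∈ congSet Fq d l, Measure.map (fun g => k * g) (η l) = η l

/-- `K^{(l)} ∩ H` in the coordinates of `H`: matrices with entries in `t^{-l}𝒪`. -/
def congSetH (m n : ℕ) (l : ℕ) : Set (Fin m → Fin n → KK Fq) :=
  {A | ∀ i j, ∀ s : ℤ, s < l → (A i j).coeff s = 0}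

/-- The probability Haar measure on `K^{(l)} ∩ H`: the normalized restriction of `λ^{mn}`. -/
def haarCongH (m n : ℕ) (lam : Measure (KK Fq)) (l : ℕ) : Measure (Fin m → Fin n → KK Fq) :=
  (lamMat Fq m n lam (congSetH Fq m n l))⁻¹ • (lamMat Fq m n lam).restrict (congSetH Fq m n l)

/-- The averaging operator `Av_l` over `K^{(l)} ∩ H` on functions on `H`. -/
def avgH {m n : ℕ} (lam : Measure (KK Fq)) (l : ℕ) (f : (Fin m → Fin n → KK Fq) → ℝ) :
    (Fin m → Fin n → KK Fq) → ℝ := fun A => ∫ B, f (A + B) ∂(haarCongH Fq m n lam l)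

/-- The level-`l` projection `pr[l]` on functions on `H`. -/
def prH {m n : ℕ} (lam : Measure (KK Fq)) :
    ℕ → ((Fin m → Fin n → KK Fq) → ℝ) → (Fin m → Fin n → KK Fq) → ℝ
  | 0 => fun f => avgH Fq lam 0 f
  | (l + 1) => fun f => avgH Fq lam (l + 1) f - avgH Fq lam l f

/-- The degree-`k` Sobolev norm on `C_c^∞(H)`. -/
def sobolevH {m n : ℕ} (lam : Measure (KK Fq)) (k : ℕ)
    (f : (Fin m → Fin n → KK Fq) → ℝ) : ℝ :=
  Real.sqrt (∑' l : ℕ, (Fintype.card Fq : ℝ) ^ (l * k) *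
    ∫ A, (prH Fq lam l f A) ^ 2 ∂(lamMat Fq m n lam))

/-- Splitting of a vector of `K^{m+n}` into its first `m` and last `n` coordinates. -/
def vSplit {m n : ℕ} (v : Fin (m + n) → KK Fq) : (Fin m → KK Fq) × (Fin n → KK Fq) :=
  (fun i => v (Fin.castAdd n i), fun j => v (Fin.natAdd m j))

/-- `π_α(x) ∈ C`: some point of the weighted dilation orbit
`{(t^{k a₁}x₁,…,t^{k a_m}x_m) : k ∈ ℤ}` of `x` lies in `C` (`C` a subset of the unit
sphere `S^{m-1}`). -/
def dirMemA {m n : ℕ} (a : Fin (m + n) → ℕ) (C : Set (Fin m → KK Fq))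
    (x : Fin m → KK Fq) : Prop :=
  ∃ k : ℤ, (fun i => tElem Fq ^ (k * (a (Fin.castAdd n i) : ℤ)) * x i) ∈ C

/-- `π_β(y) ∈ C` for the weights `a_{m+1},…,a_{m+n}`. -/
def dirMemB {m n : ℕ} (a : Fin (m + n) → ℕ) (C : Set (Fin n → KK Fq))
    (y : Fin n → KK Fq) : Prop :=
  ∃ k : ℤ, (fun j => tElem Fq ^ (k * (a (Fin.natAdd m j) : ℤ)) * y j) ∈ C

/-- The set `E_{T,R} = {(x,y) : ‖x‖_α < q^R/‖y‖_β, 1 ≤ ‖y‖_β ≤ q^T}`. -/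
def ESet {m n : ℕ} (a : Fin (m + n) → ℕ) (T R : ℝ) :
    Set ((Fin m → KK Fq) × (Fin n → KK Fq)) :=
  {p | normAlpha Fq a p.1 < (Fintype.card Fq : ℝ) ^ R / normBeta Fq a p.2 ∧
       1 ≤ normBeta Fq a p.2 ∧ normBeta Fq a p.2 ≤ (Fintype.card Fq : ℝ) ^ T}

/-- The set `F_{S,R} = {(x,y) : ‖x‖_α < q^R/‖y‖_β, 1 ≤ ‖x‖_α ≤ q^S}`. -/
def FSet {m n : ℕ} (a : Fin (m + n) → ℕ) (S R : ℝ) :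
    Set ((Fin m → KK Fq) × (Fin n → KK Fq)) :=
  {p | normAlpha Fq a p.1 < (Fintype.card Fq : ℝ) ^ R / normBeta Fq a p.2 ∧
       1 ≤ normAlpha Fq a p.1 ∧ normAlpha Fq a p.1 ≤ (Fintype.card Fq : ℝ) ^ S}

/-- The set `E_{T,R}(C₁,C₂)`: points of `E_{T,R}` with directions in `C₁`, `C₂`. -/
def ESetDir {m n : ℕ} (a : Fin (m + n) → ℕ) (T R : ℝ)
    (C₁ : Set (Fin m → KK Fq)) (C₂ : Set (Fin n → KK Fq)) :
    Set ((Fin m → KK Fq) × (Fin n → KK Fq)) :=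
  {p | p ∈ ESet Fq a T R ∧ dirMemA Fq a C₁ p.1 ∧ dirMemB Fq a C₂ p.2}

/-- `N_R(T,A)`: the number of nonzero `(p,q) ∈ Z^m × Z^n` with
`‖Aq − p‖_α < q^R/‖q‖_β` and `1 ≤ ‖q‖_β ≤ q^T`. -/
def countSol {m n : ℕ} (a : Fin (m + n) → ℕ) (T R : ℝ) (A : Fin m → Fin n → KK Fq) : ℕ :=
  Nat.card {pq : (Fin m → KK Fq) × (Fin n → KK Fq) //
    pq ≠ 0 ∧ (∀ i, pq.1 i ∈ Zring Fq) ∧ (∀ j, pq.2 j ∈ Zring Fq) ∧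
    ((Matrix.of A).mulVec pq.2 - pq.1, pq.2) ∈ ESet Fq a T R}

/-- `N_R(T,A)(C₁,C₂)`: as `countSol`, with the direction constraints
`π_α(Aq−p) ∈ C₁`, `π_β(q) ∈ C₂`. -/
def countSolDir {m n : ℕ} (a : Fin (m + n) → ℕ) (T R : ℝ)
    (C₁ : Set (Fin m → KK Fq)) (C₂ : Set (Fin n → KK Fq)) (A : Fin m → Fin n → KK Fq) : ℕ :=
  Nat.card {pq : (Fin m → KK Fq) × (Fin n → KK Fq) //
    pq ≠ 0 ∧ (∀ i, pq.1 i ∈ Zring Fq) ∧ (∀ j, pq.2 j ∈ Zring Fq) ∧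
    ((Matrix.of A).mulVec pq.2 - pq.1, pq.2) ∈ ESetDir Fq a T R C₁ C₂}

/-- The Siegel transform `f̂(Λ) = Σ_{v ∈ Λ∖{0}} f(v)` of the characteristic function of a
set `S ⊆ K^d`, evaluated at the lattice `g·Z^d`. -/
def siegel {d : ℕ} (S : Set (Fin d → KK Fq)) (g : Matrix (Fin d) (Fin d) (KK Fq)) : ℕ :=
  Nat.card {v : Fin d → KK Fq // v ∈ latticeOf Fq g ∧ v ≠ 0 ∧ v ∈ S}

/-- The ball of radius `ρ` centered at the origin in `(K^d, ‖·‖_∞)`. -/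
def ballVec (d : ℕ) (ρ : ℝ) : Set (Fin d → KK Fq) := {v | normInf Fq v < ρ}

/-- The ball of radius `ρ` centered at `0` in `(Mat_{m×n}(K), ‖·‖_∞)`
(equivalently, the ball centered at the identity in `H`). -/
def ballMat (m n : ℕ) (ρ : ℝ) : Set (Fin m → Fin n → KK Fq) := {A | normInfMat Fq A < ρ}

/-- The ball of radius `ρ` centered at the identity in `G`, for the metric induced by the
supremum norm on matrix entries. -/
def ballG (d : ℕ) (ρ : ℝ) : Set (G Fq d) :=
  {g | normInfMat Fq (fun i j => (g : Matrix (Fin d) (Fin d) (KK Fq)) i j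
        - (1 : Matrix (Fin d) (Fin d) (KK Fq)) i j) < ρ}


/-! ### Auxiliary development for the measure formula -/

section MeasureFormulaAux

open scoped ENNReal

/-- The closed ball `{f : |f| ≤ q^s}` in `K`. -/
def Bball (s : ℤ) : Set (KK Fq) := {f | ∀ n : ℤ, n < -s → f.coeff n = 0}

lemma zero_mem_Bball (s : ℤ) : (0 : KK Fq) ∈ Bball Fq s := fun _ _ => HahnSeries.coeff_zero

lemma Bball_mono {s s' : ℤ} (h : s ≤ s') : Bball Fq s ⊆ Bball Fq s' :=
  fun f hf n hn => hf n (by omega)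

lemma mem_Bball_iff_v {s : ℤ} {f : KK Fq} :
    f ∈ Bball Fq s ↔ Valued.v f ≤ ((Multiplicative.ofAdd s : Multiplicative ℤ) :
      WithZero (Multiplicative ℤ)) := by
  have := (LaurentSeries.valuation_le_iff_coeff_lt_eq_zero Fq (D := -s) (f := f))
  rw [neg_neg] at this
  exact this.symm

lemma isOpen_Bball (s : ℤ) : IsOpen (Bball Fq s) := by
  rw [isOpen_iff_mem_nhds]
  intro f hf
  rw [Valued.mem_nhds]
  have h0 : (HahnSeries.single (-s) (1:Fq) : KK Fq) ≠ 0 := HahnSeries.single_ne_zero one_ne_zero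
  refine ⟨Units.mk0 (Valued.v.restrict (HahnSeries.single (-s) (1:Fq) : KK Fq)) (by simp [h0]),
    fun g hg => ?_⟩
  rw [Set.mem_setOf_eq, Units.val_mk0, Valuation.restrict_lt_iff] at hg
  have he : (HahnSeries.single (-s) (1:Fq) : KK Fq) ∈ Bball Fq s :=
    fun n hn => HahnSeries.coeff_single_of_ne (by omega)
  rw [mem_Bball_iff_v] at hf he ⊢
  have hgf : g = f + (g - f) := by ring
  rw [hgf]
  exact le_trans (Valued.v.map_add f (g - f)) (max_le hf (hg.le.trans he))

lemma measurableSet_Bball (s : ℤ) : MeasurableSet (Bball Fq s) :=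
  (isOpen_Bball Fq s).measurableSet

lemma mem_Bball_iff_order {f : KK Fq} (hf : f ≠ 0) {s : ℤ} :
    f ∈ Bball Fq s ↔ -f.order ≤ s := by
  constructor
  · intro h
    by_contra hlt
    push_neg at hlt
    exact (HahnSeries.coeff_order_eq_zero.not.2 hf) (h _ (by omega))
  · intro h n hn
    exact HahnSeries.coeff_eq_zero_of_lt_order (by omega)

lemma lam_Bball_succ (lam : Measure (KK Fq)) [Measure.IsAddHaarMeasure lam] (s : ℤ) :
    lam (Bball Fq (s + 1)) = (Fintype.card Fq : ℝ≥0∞) * lam (Bball Fq s) := by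
  classical
  have hcover : Bball Fq (s + 1) =
      ⋃ c : Fq, (fun g => -(HahnSeries.single (-(s+1)) c : KK Fq) + g) ⁻¹' (Bball Fq s) := by
    ext g
    simp only [Set.mem_iUnion, Set.mem_preimage]
    constructor
    · intro hg
      refine ⟨g.coeff (-(s+1)), fun p hp => ?_⟩
      rw [HahnSeries.coeff_add, HahnSeries.coeff_neg]
      rcases eq_or_ne p (-(s+1)) with h | h
      · rw [h, HahnSeries.coeff_single_same]; ring
      · rw [HahnSeries.coeff_single_of_ne h, hg p (by omega)]; ring
    · rintro ⟨c, hc⟩ p hp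
      have h2 := hc p (by omega)
      rw [HahnSeries.coeff_add, HahnSeries.coeff_neg,
        HahnSeries.coeff_single_of_ne (by omega : p ≠ -(s+1))] at h2
      simpa using h2
  have hmeas : ∀ c : Fq, MeasurableSet
      ((fun g => -(HahnSeries.single (-(s+1)) c : KK Fq) + g) ⁻¹' (Bball Fq s)) :=
    fun c => (measurableSet_Bball Fq s).preimage (measurable_const_add _)
  have hdisj : Pairwise (Function.onFun Disjoint
      (fun c : Fq => (fun g => -(HahnSeries.single (-(s+1)) c : KK Fq) + g) ⁻¹' (Bball Fq s))) := by
    intro c c' hne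
    rw [Function.onFun]
    refine Set.disjoint_left.mpr fun g hg hg' => hne ?_
    have h1 := hg (-(s+1)) (by omega)
    have h2 := hg' (-(s+1)) (by omega)
    rw [HahnSeries.coeff_add, HahnSeries.coeff_neg, HahnSeries.coeff_single_same] at h1 h2
    have e1 : c = g.coeff (-(s+1)) := by linear_combination -h1
    have e2 : c' = g.coeff (-(s+1)) := by linear_combination -h2
    rw [e1, e2]
  rw [hcover, measure_iUnion hdisj hmeas]
  have hc : ∀ c : Fq,
      lam ((fun g => -(HahnSeries.single (-(s+1)) c : KK Fq) + g) ⁻¹' (Bball Fq s))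
        = lam (Bball Fq s) := fun c => measure_preimage_add lam _ _
  simp_rw [hc, tsum_fintype]
  simp [Finset.card_univ, nsmul_eq_mul]

lemma lam_Bball (lam : Measure (KK Fq)) [Measure.IsAddHaarMeasure lam]
    (hlam : lam (Oring Fq) = 1) (s : ℤ) :
    lam (Bball Fq s) = ENNReal.ofReal ((Fintype.card Fq : ℝ) ^ s) := by
  have hq1 : (1:ℝ) < (Fintype.card Fq : ℝ) := Nat.one_lt_cast.mpr Fintype.one_lt_card
  have hq0 : (0:ℝ) < (Fintype.card Fq : ℝ) := lt_trans one_pos hq1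
  have hcast : (Fintype.card Fq : ℝ≥0∞) = ENNReal.ofReal (Fintype.card Fq : ℝ) := by
    rw [ENNReal.ofReal_natCast]
  have base : lam (Bball Fq 0) = 1 := by
    have h0 : Bball Fq 0 = Oring Fq := by
      ext f
      constructor
      · intro hf i hi; exact hf i (by omega)
      · intro hf i hi; exact hf i (by omega)
    rw [h0, hlam]
  induction s using Int.induction_on with
  | zero => simpa using base
  | succ k ih =>
      rw [lam_Bball_succ Fq lam k, ih, hcast, ← ENNReal.ofReal_mul hq0.le]
      congr 1
      rw [zpow_add_one₀ hq0.ne']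
      ring
  | pred k ih =>
      have h2 := lam_Bball_succ Fq lam (-(k:ℤ) - 1)
      rw [show (-(k:ℤ) - 1) + 1 = -(k:ℤ) by ring, ih] at h2
      have h3 : ENNReal.ofReal ((Fintype.card Fq : ℝ) ^ (-(k:ℤ)))
          = (Fintype.card Fq : ℝ≥0∞) *
            ENNReal.ofReal ((Fintype.card Fq : ℝ) ^ (-(k:ℤ) - 1)) := by
        rw [hcast, ← ENNReal.ofReal_mul hq0.le]
        congr 1
        conv_lhs => rw [show -(k:ℤ) = (-(k:ℤ)-1)+1 by ring]
        rw [zpow_add_one₀ hq0.ne']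
        ring
      rw [h3] at h2
      have := (ENNReal.mul_right_inj (a := (Fintype.card Fq : ℝ≥0∞))
        (Nat.cast_ne_zero.mpr Fintype.card_ne_zero) (ENNReal.natCast_ne_top _)).mp h2
      exact this.symm

lemma absK_eq_zpow {f : KK Fq} (hf : f ≠ 0) :
    absK Fq f = (Fintype.card Fq : ℝ) ^ (-f.order) := by
  rw [absK, if_neg hf]

lemma absK_zero : absK Fq 0 = 0 := by rw [absK, if_pos rfl]

lemma absK_rpow_le_iff {f : KK Fq} {w : ℕ} (hw : 0 < w) {c : ℝ} :
    (absK Fq f) ^ ((w : ℝ)⁻¹) ≤ (Fintype.card Fq : ℝ) ^ c ↔ f ∈ Bball Fq ⌊c * (w : ℝ)⌋ := by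
  have hq1 : (1:ℝ) < (Fintype.card Fq : ℝ) := Nat.one_lt_cast.mpr Fintype.one_lt_card
  have hq0 : (0:ℝ) < (Fintype.card Fq : ℝ) := lt_trans one_pos hq1
  have hwR : (0:ℝ) < (w : ℝ) := Nat.cast_pos.mpr hw
  by_cases hf : f = 0
  · rw [hf, absK_zero, Real.zero_rpow (inv_ne_zero hwR.ne')]
    exact iff_of_true (Real.rpow_pos_of_pos hq0 c).le (zero_mem_Bball Fq _)
  · rw [absK_eq_zpow Fq hf, ← Real.rpow_intCast _ (-f.order), ← Real.rpow_mul hq0.le,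
      Real.rpow_le_rpow_left_iff hq1, ← div_eq_mul_inv, div_le_iff₀ hwR,
      ← Int.le_floor, mem_Bball_iff_order Fq hf]

lemma absK_rpow_lt_iff {f : KK Fq} {w : ℕ} (hw : 0 < w) {c : ℝ} :
    (absK Fq f) ^ ((w : ℝ)⁻¹) < (Fintype.card Fq : ℝ) ^ c
      ↔ f ∈ Bball Fq (⌈c * (w : ℝ)⌉ - 1) := by
  have hq1 : (1:ℝ) < (Fintype.card Fq : ℝ) := Nat.one_lt_cast.mpr Fintype.one_lt_card
  have hq0 : (0:ℝ) < (Fintype.card Fq : ℝ) := lt_trans one_pos hq1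
  have hwR : (0:ℝ) < (w : ℝ) := Nat.cast_pos.mpr hw
  by_cases hf : f = 0
  · rw [hf, absK_zero, Real.zero_rpow (inv_ne_zero hwR.ne')]
    exact iff_of_true (Real.rpow_pos_of_pos hq0 c) (zero_mem_Bball Fq _)
  · rw [absK_eq_zpow Fq hf, ← Real.rpow_intCast _ (-f.order), ← Real.rpow_mul hq0.le,
      Real.rpow_lt_rpow_left_iff hq1, ← div_eq_mul_inv, div_lt_iff₀ hwR,
      ← Int.lt_ceil, mem_Bball_iff_order Fq hf]
    omega

lemma normWt_le_iff {k : ℕ} (hk : 0 < k) {w : Fin k → ℕ} (hw : ∀ i, 0 < w i)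
    (x : Fin k → KK Fq) {c : ℝ} :
    normWt Fq w x ≤ (Fintype.card Fq : ℝ) ^ c
      ↔ ∀ i, x i ∈ Bball Fq ⌊c * (w i : ℝ)⌋ := by
  haveI : Nonempty (Fin k) := Fin.pos_iff_nonempty.mp hk
  rw [normWt, ciSup_le_iff (Set.Finite.bddAbove (Set.finite_range _))]
  exact forall_congr' fun i => absK_rpow_le_iff Fq (hw i)

lemma normWt_lt_iff {k : ℕ} (hk : 0 < k) {w : Fin k → ℕ} (hw : ∀ i, 0 < w i)
    (x : Fin k → KK Fq) {c : ℝ} :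
    normWt Fq w x < (Fintype.card Fq : ℝ) ^ c
      ↔ ∀ i, x i ∈ Bball Fq (⌈c * (w i : ℝ)⌉ - 1) := by
  haveI : Nonempty (Fin k) := Fin.pos_iff_nonempty.mp hk
  constructor
  · intro h i
    rw [normWt] at h
    exact (absK_rpow_lt_iff Fq (hw i)).mp
      (lt_of_le_of_lt (le_ciSup (f := fun j => (absK Fq (x j)) ^ ((w j : ℝ)⁻¹)) (Set.Finite.bddAbove (Set.finite_range _)) i) h)
  · intro h
    obtain ⟨i, hi⟩ : ∃ i, (absK Fq (x i)) ^ ((w i : ℝ)⁻¹)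
        = ⨆ j, (absK Fq (x j)) ^ ((w j : ℝ)⁻¹) := exists_eq_ciSup_of_finite
    rw [normWt, ← hi]
    exact (absK_rpow_lt_iff Fq (hw i)).mpr (h i)

lemma real_prod_zpow {ι : Type*} (x : ℝ) (hx : x ≠ 0) (s : Finset ι) (f : ι → ℤ) :
    ∏ i ∈ s, x ^ f i = x ^ ∑ i ∈ s, f i := by
  classical
  induction s using Finset.induction with
  | empty => simp
  | insert _ _ h ih => rw [Finset.prod_insert h, Finset.sum_insert h, ih, zpow_add₀ hx]

lemma floor_eq_ceil_sub_one_of_not_int (v : ℚ) (hv : ¬ ∃ z : ℤ, v = z) : ⌊v⌋ = ⌈v⌉ - 1 := by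
  have h1 := Int.ceil_le_floor_add_one v
  have h2 : ⌊v⌋ < ⌈v⌉ := by
    rcases lt_or_ge ⌊v⌋ ⌈v⌉ with h | h
    · exact h
    · exfalso
      refine hv ⟨⌊v⌋, ?_⟩
      have hle := Int.floor_le v
      have hge := Int.le_ceil v
      have hcast : (⌈v⌉ : ℚ) ≤ (⌊v⌋ : ℚ) := by exact_mod_cast h
      exact le_antisymm (by linarith) hle
  omega

/-- Level set: `{y : ‖y‖_β ≤ q^k}`. -/
def Yle (m n : ℕ) (a : Fin (m + n) → ℕ) (k : ℚ) : Set (Fin n → KK Fq) :=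
  Set.pi Set.univ fun j => Bball Fq ⌊k * (a (Fin.natAdd m j) : ℚ)⌋

/-- Level set: `{y : ‖y‖_β < q^k}`. -/
def Ylt (m n : ℕ) (a : Fin (m + n) → ℕ) (k : ℚ) : Set (Fin n → KK Fq) :=
  Set.pi Set.univ fun j => Bball Fq (⌈k * (a (Fin.natAdd m j) : ℚ)⌉ - 1)

/-- Level set: `{x : ‖x‖_α < q^c}`. -/
def Xlt (m n : ℕ) (a : Fin (m + n) → ℕ) (c : ℚ) : Set (Fin m → KK Fq) :=
  Set.pi Set.univ fun i => Bball Fq (⌈c * (a (Fin.castAdd n i) : ℚ)⌉ - 1)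

lemma normBeta_le_iff {m n : ℕ} (hn : 0 < n) {a : Fin (m + n) → ℕ} (ha : ∀ i, 0 < a i)
    (y : Fin n → KK Fq) (k : ℚ) :
    normBeta Fq a y ≤ (Fintype.card Fq : ℝ) ^ ((k : ℝ)) ↔ y ∈ Yle Fq m n a k := by
  rw [normBeta, normWt_le_iff Fq hn (fun j => ha _) y, Yle, Set.mem_univ_pi]
  refine forall_congr' fun j => ?_
  rw [show (k:ℝ) * ((a (Fin.natAdd m j) : ℕ) : ℝ)
      = ((k * (a (Fin.natAdd m j) : ℚ) : ℚ) : ℝ) by push_cast; ring, Rat.floor_cast]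

lemma normBeta_lt_iff {m n : ℕ} (hn : 0 < n) {a : Fin (m + n) → ℕ} (ha : ∀ i, 0 < a i)
    (y : Fin n → KK Fq) (k : ℚ) :
    normBeta Fq a y < (Fintype.card Fq : ℝ) ^ ((k : ℝ)) ↔ y ∈ Ylt Fq m n a k := by
  rw [normBeta, normWt_lt_iff Fq hn (fun j => ha _) y, Ylt, Set.mem_univ_pi]
  refine forall_congr' fun j => ?_
  rw [show (k:ℝ) * ((a (Fin.natAdd m j) : ℕ) : ℝ)
      = ((k * (a (Fin.natAdd m j) : ℚ) : ℚ) : ℝ) by push_cast; ring, Rat.ceil_cast]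

lemma normAlpha_lt_iff {m n : ℕ} (hm : 0 < m) {a : Fin (m + n) → ℕ} (ha : ∀ i, 0 < a i)
    (x : Fin m → KK Fq) (c : ℚ) :
    normAlpha Fq a x < (Fintype.card Fq : ℝ) ^ ((c : ℝ)) ↔ x ∈ Xlt Fq m n a c := by
  rw [normAlpha, normWt_lt_iff Fq hm (fun i => ha _) x, Xlt, Set.mem_univ_pi]
  refine forall_congr' fun i => ?_
  rw [show (c:ℝ) * ((a (Fin.castAdd n i) : ℕ) : ℝ)
      = ((c * (a (Fin.castAdd n i) : ℚ) : ℚ) : ℝ) by push_cast; ring, Rat.ceil_cast]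

lemma normBeta_eq_iff {m n : ℕ} (hn : 0 < n) {a : Fin (m + n) → ℕ} (ha : ∀ i, 0 < a i)
    (y : Fin n → KK Fq) (k : ℚ) :
    normBeta Fq a y = (Fintype.card Fq : ℝ) ^ ((k : ℝ))
      ↔ y ∈ Yle Fq m n a k \ Ylt Fq m n a k := by
  rw [Set.mem_diff, ← normBeta_le_iff Fq hn ha y k, ← normBeta_lt_iff Fq hn ha y k]
  constructor
  · intro h
    exact ⟨h.le, by rw [h]; exact lt_irrefl _⟩
  · rintro ⟨h1, h2⟩
    exact le_antisymm h1 (not_lt.mp h2)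

lemma exists_level {m n : ℕ} (hn : 0 < n) {a : Fin (m + n) → ℕ} (ha : ∀ i, 0 < a i)
    (y : Fin n → KK Fq) (h1 : 1 ≤ normBeta Fq a y) :
    ∃ k : ℚ, 0 ≤ k ∧ (∃ j : Fin n, ∃ z : ℤ, k * (a (Fin.natAdd m j) : ℚ) = z) ∧
      normBeta Fq a y = (Fintype.card Fq : ℝ) ^ ((k : ℝ)) := by
  have hq1 : (1:ℝ) < (Fintype.card Fq : ℝ) := Nat.one_lt_cast.mpr Fintype.one_lt_card
  have hq0 : (0:ℝ) < (Fintype.card Fq : ℝ) := lt_trans one_pos hq1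
  haveI : Nonempty (Fin n) := Fin.pos_iff_nonempty.mp hn
  obtain ⟨j₀, hj₀⟩ : ∃ j, absK Fq (y j) ^ (((a (Fin.natAdd m j) : ℕ) : ℝ)⁻¹)
      = ⨆ j', absK Fq (y j') ^ (((a (Fin.natAdd m j') : ℕ) : ℝ)⁻¹) :=
    exists_eq_ciSup_of_finite
  have hval : normBeta Fq a y = absK Fq (y j₀) ^ (((a (Fin.natAdd m j₀) : ℕ) : ℝ)⁻¹) := by
    rw [normBeta, normWt, ← hj₀]
  have hwpos : (0:ℝ) < ((a (Fin.natAdd m j₀) : ℕ) : ℝ) := Nat.cast_pos.mpr (ha _)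
  have hy0 : y j₀ ≠ 0 := by
    intro h0
    rw [h0, absK_zero, Real.zero_rpow (inv_ne_zero hwpos.ne')] at hval
    rw [hval] at h1
    linarith
  set z : ℤ := -(y j₀).order with hz
  set wj : ℕ := a (Fin.natAdd m j₀) with hwj
  set k : ℚ := (z : ℚ) / (wj : ℚ) with hk
  have hwQ : ((wj : ℕ) : ℚ) ≠ 0 := Nat.cast_ne_zero.mpr (ha _).ne'
  have hval2 : normBeta Fq a y = (Fintype.card Fq : ℝ) ^ ((k : ℝ)) := by
    rw [hval, absK_eq_zpow Fq hy0, ← Real.rpow_intCast _ (-(y j₀).order),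
      ← Real.rpow_mul hq0.le]
    congr 1
    rw [hk, hz]
    push_cast
    ring
  have hk0 : 0 ≤ k := by
    have : (Fintype.card Fq : ℝ) ^ ((0:ℚ) : ℝ) ≤ (Fintype.card Fq : ℝ) ^ ((k : ℝ)) := by
      rw [show (((0:ℚ)) : ℝ) = (0:ℝ) by norm_num, Real.rpow_zero, ← hval2]
      exact h1
    have := (Real.rpow_le_rpow_left_iff hq1).mp this
    exact_mod_cast this
  exact ⟨k, hk0, ⟨j₀, z, by rw [hk]; field_simp; rfl⟩, hval2⟩

lemma lamVec_pi_Bball {d : ℕ} (lam : Measure (KK Fq)) [SigmaFinite lam]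
    [Measure.IsAddHaarMeasure lam] (hlam : lam (Oring Fq) = 1) (e : Fin d → ℤ) :
    lamVec Fq d lam (Set.pi Set.univ fun i => Bball Fq (e i))
      = ENNReal.ofReal ((Fintype.card Fq : ℝ) ^ (∑ i, e i)) := by
  have hq1 : (1:ℝ) < (Fintype.card Fq : ℝ) := Nat.one_lt_cast.mpr Fintype.one_lt_card
  have hq0 : (0:ℝ) < (Fintype.card Fq : ℝ) := lt_trans one_pos hq1
  rw [lamVec, Measure.pi_pi]
  have hB : ∀ i : Fin d, lam (Bball Fq (e i))
      = ENNReal.ofReal ((Fintype.card Fq : ℝ) ^ (e i)) := fun i => lam_Bball Fq lam hlam (e i)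
  rw [Finset.prod_congr rfl (fun i _ => hB i),
    ← ENNReal.ofReal_prod_of_nonneg (fun i _ => (zpow_pos hq0 _).le),
    real_prod_zpow _ hq0.ne']

end MeasureFormulaAux

/-- the formula for `Ψ_R(T) = λ^{m+n}(E_{T,R})`: for positive integers
`T` and `R`, `λ^{m+n}(E_{T,R})` equals the sum over all rationals `k ∈ [0,T]` of
`q^{⌈(R−k)a₁⌉+⋯+⌈(R−k)a_m⌉−m}·(q^{⌊ka_{m+1}⌋+⋯+⌊ka_{m+n}⌋} − q^{⌈ka_{m+1}⌉+⋯+⌈ka_{m+n}⌉−n})`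
(only finitely many terms are nonzero). -/
theorem measure_ESet_formula
    (Fq : Type) [Field Fq] [Fintype Fq] (m n : ℕ) (hm : 0 < m) (hn : 0 < n)
    (a : Fin (m + n) → ℕ) (ha : ∀ i, 0 < a i)
    (hsum : ∑ i : Fin m, a (Fin.castAdd n i) = ∑ j : Fin n, a (Fin.natAdd m j))
    (lam : Measure (KK Fq)) [SigmaFinite lam] [Measure.IsAddHaarMeasure lam]
    (hlam : lam (Oring Fq) = 1)
    (T R : ℕ) (hT : 0 < T) (hR : 0 < R) :
    (((lamVec Fq m lam).prod (lamVec Fq n lam)) (ESet Fq a (T : ℝ) (R : ℝ))).toReal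
      = ∑' k : {k : ℚ // 0 ≤ k ∧ k ≤ (T : ℚ)},
          (Fintype.card Fq : ℝ) ^
              ((∑ i : Fin m, ⌈((R : ℚ) - (k : ℚ)) * (a (Fin.castAdd n i) : ℚ)⌉) - (m : ℤ)) *
            ((Fintype.card Fq : ℝ) ^ (∑ j : Fin n, ⌊(k : ℚ) * (a (Fin.natAdd m j) : ℚ)⌋) -
              (Fintype.card Fq : ℝ) ^
                ((∑ j : Fin n, ⌈(k : ℚ) * (a (Fin.natAdd m j) : ℚ)⌉) - (n : ℤ))) := by
  classical
  haveI : SigmaFinite (lamVec Fq n lam) := by unfold lamVec; infer_instance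
  haveI : SigmaFinite (lamVec Fq m lam) := by unfold lamVec; infer_instance
  have hq1 : (1:ℝ) < (Fintype.card Fq : ℝ) := Nat.one_lt_cast.mpr Fintype.one_lt_card
  have hq0 : (0:ℝ) < (Fintype.card Fq : ℝ) := lt_trans one_pos hq1
  -- the index set
  set S : Set ℚ := {k | 0 ≤ k ∧ k ≤ (T:ℚ) ∧
      ∃ j : Fin n, ∃ z : ℤ, k * (a (Fin.natAdd m j) : ℚ) = z} with hS
  set A : ℕ := ∑ j : Fin n, a (Fin.natAdd m j) with hA
  have hSfin : S.Finite := by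
    have hsub : S ⊆ ↑((Finset.univ ×ˢ Finset.Icc (0:ℤ) ((T:ℤ) * (A:ℤ))).image
        (fun p : Fin n × ℤ => (p.2 : ℚ) / (a (Fin.natAdd m p.1) : ℚ))) := by
      rintro k ⟨hk0, hkT, j, z, hjz⟩
      have haj : (0:ℚ) < (a (Fin.natAdd m j) : ℚ) := Nat.cast_pos.mpr (ha _)
      simp only [Finset.coe_image, Set.mem_image, Finset.mem_coe, Finset.mem_product,
        Finset.mem_Icc, Finset.mem_univ, true_and]
      refine ⟨(j, z), ⟨?_, ?_⟩, ?_⟩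
      · have : (0:ℚ) ≤ (z:ℚ) := by rw [← hjz]; exact mul_nonneg hk0 haj.le
        exact_mod_cast this
      · have h1 : (z:ℚ) ≤ (T:ℚ) * (A:ℚ) := by
          rw [← hjz]
          have h2 : (a (Fin.natAdd m j) : ℚ) ≤ (A:ℚ) := by
            have := Finset.single_le_sum
              (f := fun j : Fin n => a (Fin.natAdd m j))
              (fun _ _ => Nat.zero_le _) (Finset.mem_univ j)
            exact_mod_cast this
          exact mul_le_mul hkT h2 haj.le (Nat.cast_nonneg _)
        exact_mod_cast h1
      · exact ((eq_div_iff haj.ne').mpr hjz).symm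
    exact Set.Finite.subset (Finset.finite_toSet _) hsub
  set D : Finset ℚ := hSfin.toFinset with hD
  -- rewriting the strict inequality on `x`
  have haX : ∀ (k : ℚ) (x : Fin m → KK Fq) (y : Fin n → KK Fq),
      normBeta Fq a y = (Fintype.card Fq : ℝ) ^ ((k:ℚ):ℝ) →
      (normAlpha Fq a x < (Fintype.card Fq : ℝ) ^ ((R:ℕ):ℝ) / normBeta Fq a y
        ↔ x ∈ Xlt Fq m n a ((R:ℚ) - k)) := by
    intro k x y hy
    rw [hy, ← Real.rpow_sub hq0,
      show ((R:ℕ):ℝ) - ((k:ℚ):ℝ) = ((((R:ℚ) - k) : ℚ) : ℝ) by push_cast; ring]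
    exact normAlpha_lt_iff Fq hm ha x _
  -- the decomposition of `E` into levels
  have hE : ESet Fq a (T:ℝ) (R:ℝ)
      = ⋃ k ∈ D, (Xlt Fq m n a ((R:ℚ) - k)) ×ˢ (Yle Fq m n a k \ Ylt Fq m n a k) := by
    ext p
    obtain ⟨x, y⟩ := p
    simp only [ESet, Set.mem_setOf_eq, Set.mem_iUnion, Set.mem_prod, exists_prop]
    constructor
    · rintro ⟨hxy, h1, h2⟩
      obtain ⟨k, hk0, hkint, hval⟩ := exists_level Fq hn ha y h1
      have hkT : k ≤ (T:ℚ) := by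
        rw [hval] at h2
        have := (Real.rpow_le_rpow_left_iff hq1).mp h2
        exact_mod_cast this
      exact ⟨k, hSfin.mem_toFinset.mpr ⟨hk0, hkT, hkint⟩, (haX k x y hval).mp hxy,
        (normBeta_eq_iff Fq hn ha y k).mp hval⟩
    · rintro ⟨k, hkD, hx, hy⟩
      obtain ⟨hk0, hkT, -⟩ := hSfin.mem_toFinset.mp hkD
      have hval := (normBeta_eq_iff Fq hn ha y k).mpr hy
      refine ⟨(haX k x y hval).mpr hx, ?_, ?_⟩
      · rw [hval]
        have h0 : ((0:ℚ):ℝ) ≤ ((k:ℚ):ℝ) := by exact_mod_cast hk0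
        have := (Real.rpow_le_rpow_left_iff (x := (Fintype.card Fq : ℝ))
          (y := ((0:ℚ):ℝ)) (z := ((k:ℚ):ℝ)) hq1).mpr h0
        simpa [Real.rpow_zero] using this
      · rw [hval]
        refine (Real.rpow_le_rpow_left_iff hq1).mpr ?_
        exact_mod_cast hkT
  -- measurability
  have hXmeas : ∀ c : ℚ, MeasurableSet (Xlt Fq m n a c) :=
    fun c => MeasurableSet.univ_pi fun i => measurableSet_Bball Fq _
  have hYleMeas : ∀ k : ℚ, MeasurableSet (Yle Fq m n a k) :=
    fun k => MeasurableSet.univ_pi fun j => measurableSet_Bball Fq _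
  have hYltMeas : ∀ k : ℚ, MeasurableSet (Ylt Fq m n a k) :=
    fun k => MeasurableSet.univ_pi fun j => measurableSet_Bball Fq _
  have hmeas : ∀ k ∈ D, MeasurableSet
      ((Xlt Fq m n a ((R:ℚ) - k)) ×ˢ (Yle Fq m n a k \ Ylt Fq m n a k)) :=
    fun k _ => (hXmeas _).prod ((hYleMeas k).diff (hYltMeas k))
  have hdisj : (↑D : Set ℚ).PairwiseDisjoint
      (fun k => (Xlt Fq m n a ((R:ℚ) - k)) ×ˢ (Yle Fq m n a k \ Ylt Fq m n a k)) := by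
    intro k _ k' _ hne
    refine Set.disjoint_left.mpr ?_
    rintro ⟨x, y⟩ ⟨hx1, hy1⟩ ⟨hx2, hy2⟩
    have h1 := (normBeta_eq_iff Fq hn ha y k).mpr hy1
    have h2 := (normBeta_eq_iff Fq hn ha y k').mpr hy2
    apply hne
    have heq := h1.symm.trans h2
    have : ((k:ℚ):ℝ) = ((k':ℚ):ℝ) :=
      le_antisymm ((Real.rpow_le_rpow_left_iff hq1).mp heq.le)
        ((Real.rpow_le_rpow_left_iff hq1).mp heq.ge)
    exact_mod_cast this
  -- per-level measure computation
  have hterm : ∀ k : ℚ, ((lamVec Fq m lam).prod (lamVec Fq n lam))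
      ((Xlt Fq m n a ((R:ℚ) - k)) ×ˢ (Yle Fq m n a k \ Ylt Fq m n a k))
      = ENNReal.ofReal ((Fintype.card Fq : ℝ) ^
          ((∑ i : Fin m, ⌈((R:ℚ) - k) * (a (Fin.castAdd n i) : ℚ)⌉) - (m:ℤ)))
        * (ENNReal.ofReal ((Fintype.card Fq : ℝ) ^
            (∑ j : Fin n, ⌊k * (a (Fin.natAdd m j) : ℚ)⌋))
           - ENNReal.ofReal ((Fintype.card Fq : ℝ) ^
            ((∑ j : Fin n, ⌈k * (a (Fin.natAdd m j) : ℚ)⌉) - (n:ℤ)))) := by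
    intro k
    rw [Measure.prod_prod]
    have hYsub : Ylt Fq m n a k ⊆ Yle Fq m n a k := by
      refine Set.pi_mono fun j _ => Bball_mono Fq ?_
      have := Int.ceil_le_floor_add_one (k * (a (Fin.natAdd m j) : ℚ))
      omega
    have hYltFin : lamVec Fq n lam (Ylt Fq m n a k) ≠ ⊤ := by
      rw [Ylt, lamVec_pi_Bball Fq lam hlam]
      exact ENNReal.ofReal_ne_top
    rw [measure_diff hYsub (hYltMeas k).nullMeasurableSet hYltFin]
    rw [Xlt, Yle, Ylt, lamVec_pi_Bball Fq lam hlam, lamVec_pi_Bball Fq lam hlam,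
      lamVec_pi_Bball Fq lam hlam]
    congr 2
    · rw [Finset.sum_sub_distrib]
      simp
    · rw [Finset.sum_sub_distrib]
      simp
  -- nonnegativity of the difference of powers
  have hBC : ∀ k : ℚ, (Fintype.card Fq : ℝ) ^
        ((∑ j : Fin n, ⌈k * (a (Fin.natAdd m j) : ℚ)⌉) - (n:ℤ))
      ≤ (Fintype.card Fq : ℝ) ^ (∑ j : Fin n, ⌊k * (a (Fin.natAdd m j) : ℚ)⌋) := by
    intro k
    refine zpow_le_zpow_right₀ hq1.le ?_
    have : ∀ j : Fin n, ⌈k * (a (Fin.natAdd m j) : ℚ)⌉ - 1 ≤ ⌊k * (a (Fin.natAdd m j) : ℚ)⌋ := by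
      intro j
      have := Int.ceil_le_floor_add_one (k * (a (Fin.natAdd m j) : ℚ))
      omega
    calc (∑ j : Fin n, ⌈k * (a (Fin.natAdd m j) : ℚ)⌉) - (n:ℤ)
        = ∑ j : Fin n, (⌈k * (a (Fin.natAdd m j) : ℚ)⌉ - 1) := by
          rw [Finset.sum_sub_distrib]; simp
      _ ≤ ∑ j : Fin n, ⌊k * (a (Fin.natAdd m j) : ℚ)⌋ :=
          Finset.sum_le_sum fun j _ => this j
  have hfin : ∀ k ∈ D, ((lamVec Fq m lam).prod (lamVec Fq n lam))
      ((Xlt Fq m n a ((R:ℚ) - k)) ×ˢ (Yle Fq m n a k \ Ylt Fq m n a k)) ≠ ⊤ := by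
    intro k _
    rw [hterm k]
    exact ENNReal.mul_ne_top ENNReal.ofReal_ne_top
      (lt_of_le_of_lt tsub_le_self ENNReal.ofReal_lt_top).ne
  -- per-level real value
  have htermR : ∀ k : ℚ, (((lamVec Fq m lam).prod (lamVec Fq n lam))
      ((Xlt Fq m n a ((R:ℚ) - k)) ×ˢ (Yle Fq m n a k \ Ylt Fq m n a k))).toReal
      = (Fintype.card Fq : ℝ) ^
          ((∑ i : Fin m, ⌈((R:ℚ) - k) * (a (Fin.castAdd n i) : ℚ)⌉) - (m:ℤ))
        * ((Fintype.card Fq : ℝ) ^ (∑ j : Fin n, ⌊k * (a (Fin.natAdd m j) : ℚ)⌋)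
           - (Fintype.card Fq : ℝ) ^
            ((∑ j : Fin n, ⌈k * (a (Fin.natAdd m j) : ℚ)⌉) - (n:ℤ))) := by
    intro k
    rw [hterm k, ← ENNReal.ofReal_sub _ (zpow_pos hq0 _).le, ENNReal.toReal_mul,
      ENNReal.toReal_ofReal (zpow_pos hq0 _).le,
      ENNReal.toReal_ofReal (sub_nonneg.mpr (hBC k))]
  -- assembling
  rw [hE, measure_biUnion_finset hdisj hmeas, ENNReal.toReal_sum hfin,
    tsum_eq_sum (s := D.subtype (fun k => 0 ≤ k ∧ k ≤ (T:ℚ)))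
      (by
        rintro ⟨b, hb0, hbT⟩ hb
        have hbD : b ∉ D := fun hmem => hb (Finset.mem_subtype.mpr hmem)
        have hnint : ∀ j : Fin n, ¬ ∃ z : ℤ, b * (a (Fin.natAdd m j) : ℚ) = (z:ℚ) := by
          intro j hj
          exact hbD (hSfin.mem_toFinset.mpr ⟨hb0, hbT, j, hj⟩)
        have hfloor : ∑ j : Fin n, ⌊b * (a (Fin.natAdd m j) : ℚ)⌋
            = (∑ j : Fin n, ⌈b * (a (Fin.natAdd m j) : ℚ)⌉) - (n:ℤ) := by
          have : ∀ j : Fin n, ⌊b * (a (Fin.natAdd m j) : ℚ)⌋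
              = ⌈b * (a (Fin.natAdd m j) : ℚ)⌉ - 1 :=
            fun j => floor_eq_ceil_sub_one_of_not_int _ (hnint j)
          rw [Finset.sum_congr rfl (fun j _ => this j), Finset.sum_sub_distrib]
          simp
        simp only [hfloor, sub_self, mul_zero])]
  refine Eq.trans (Finset.sum_congr rfl fun k _ => htermR k) ?_
  exact (Finset.sum_subtype_of_mem
    (fun k : ℚ => (Fintype.card Fq : ℝ) ^
          ((∑ i : Fin m, ⌈((R:ℚ) - k) * (a (Fin.castAdd n i) : ℚ)⌉) - (m:ℤ))
        * ((Fintype.card Fq : ℝ) ^ (∑ j : Fin n, ⌊k * (a (Fin.natAdd m j) : ℚ)⌋)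
           - (Fintype.card Fq : ℝ) ^
            ((∑ j : Fin n, ⌈k * (a (Fin.natAdd m j) : ℚ)⌉) - (n:ℤ))))
    (fun k hk => ⟨(hSfin.mem_toFinset.mp hk).1, (hSfin.mem_toFinset.mp hk).2.1⟩)).symm

end PaperKL
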